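/- Let a_1 < a_2 < ... < a_p be positive integers and e_1, ..., e_p be positive integers. If the Young diagram Y(a;e) has an allocation, then Y(a;e) is wide. -/

import Mathlib

/-- The multiset of row lengths of the Young diagram `Y(a;e)`:
`e i` rows of length `a i` for `i = 1, ..., p`. -/
def rowMultiset (p : ℕ) (a e : ℕ → ℕ) : Multiset ℕ :=
  ∑ i ∈ Finset.Icc 1 p, Multiset.replicate (e i) (a i)

/-- The sum of the `w` largest elements of the multiset `S`
(the sum of all of `S` if `S` has at most `w` elements). -/
def topSum (S : Multiset ℕ) (w : ℕ) : ℕ :=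
  ((Multiset.sort S (· ≤ ·)).reverse.take w).sum

/-- The sum of the lengths of the leftmost `w` columns of the Young diagram
whose multiset of row lengths is `S`. -/
def colSum (S : Multiset ℕ) (w : ℕ) : ℕ :=
  ∑ c ∈ Finset.Icc 1 w, (S.filter (fun r => c ≤ r)).card

/-- A Young diagram with multiset of row lengths `R` is wide if every subdiagram formed
by a subset of the rows dominates its conjugate. -/
def Wide (R : Multiset ℕ) : Prop :=
  ∀ S : Multiset ℕ, S ≤ R → ∀ w : ℕ, 0 < w → colSum S w ≤ topSum S w

/-- A Young diagram with multiset of row lengths `R` is Latin if, listing its row lengths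
as `l 1, ..., l m`, there is a filling `f` of its cells such that row `i` is filled by a
permutation of `1, ..., l i` and the entries in each column are pairwise distinct. -/
def IsLatin (R : Multiset ℕ) : Prop :=
  ∃ (m : ℕ) (l : ℕ → ℕ) (f : ℕ → ℕ → ℕ),
    (Finset.Icc 1 m).val.map l = R ∧
    (∀ i ∈ Finset.Icc 1 m,
      Set.InjOn (f i) (Set.Icc 1 (l i)) ∧
      (Finset.Icc 1 (l i)).image (f i) = Finset.Icc 1 (l i)) ∧
    (∀ j, 1 ≤ j → ∀ i₁ ∈ Finset.Icc 1 m, ∀ i₂ ∈ Finset.Icc 1 m,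
      j ≤ l i₁ → j ≤ l i₂ → f i₁ j = f i₂ j → i₁ = i₂)

/-- An allocation for the Young diagram `Y(a;e)` with `p` row blocks (where `a 0 = 0`
and `b i = a i - a (i-1)`). -/
def HasAllocation (p : ℕ) (a e : ℕ → ℕ) : Prop :=
  ∃ z : ℕ → ℕ → ℕ → ℕ,
    (∀ i j, 1 ≤ j → j ≤ i → i ≤ p →
      ∑ k ∈ Finset.Icc 1 i, z i j k = e i * (a j - a (j - 1))) ∧
    (∀ i k, 1 ≤ k → k ≤ i → i ≤ p →
      ∑ j ∈ Finset.Icc 1 i, z i j k = e i * (a k - a (k - 1))) ∧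
    (∀ j k, 1 ≤ j → j ≤ p → 1 ≤ k → k ≤ p →
      ∑ i ∈ Finset.Icc (max j k) p, z i j k ≤ (a j - a (j - 1)) * (a k - a (k - 1)))

/-- `sc a e j k`: the sum of the lengths of the leftmost `a j` columns of the tail
subdiagram `Y_k`. -/
def sc (a e : ℕ → ℕ) (j k : ℕ) : ℕ :=
  ∑ i ∈ Finset.Icc 1 k, e i * min (a i) (a j)

/-- `sr a e j k`: the sum of the lengths of the top `a j` rows of the tail
subdiagram `Y_k`. -/
def sr (a e : ℕ → ℕ) (j k : ℕ) : ℕ :=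
  topSum (rowMultiset k a e) (a j)

/-- `se e m k = ∑_{t=m}^{k} e t`. -/
def se (e : ℕ → ℕ) (m k : ℕ) : ℕ :=
  ∑ t ∈ Finset.Icc m k, e t

namespace AllocWide

open Multiset Finset

/-! ### Basic facts about `topSum` -/

/-- The descending list of elements of `S`. -/
def dlist (S : Multiset ℕ) : List ℕ := (Multiset.sort S (· ≤ ·)).reverse

/-- The `w`-th largest element of `S` (0-indexed; `0` beyond the length). -/
def nthD (S : Multiset ℕ) (w : ℕ) : ℕ := (dlist S).getD w 0

lemma dlist_length (S : Multiset ℕ) : (dlist S).length = Multiset.card S := by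
  simp [dlist, Multiset.length_sort]

lemma topSum_eq (S : Multiset ℕ) (w : ℕ) : topSum S w = ((dlist S).take w).sum := rfl

lemma topSum_zero (S : Multiset ℕ) : topSum S 0 = 0 := rfl

lemma topSum_succ (S : Multiset ℕ) (w : ℕ) :
    topSum S (w + 1) = topSum S w + nthD S w := by
  rcases lt_or_ge w (dlist S).length with h | h
  · rw [topSum_eq, topSum_eq, List.take_succ, List.sum_append, nthD,
      List.getElem?_eq_getElem h, List.getD_eq_getElem _ _ h]
    simp
  · rw [topSum_eq, topSum_eq, List.take_of_length_le h,
      List.take_of_length_le (le_trans h (Nat.le_succ _)), nthD,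
      List.getD_eq_default _ _ h, add_zero]

lemma nthD_antitone (S : Multiset ℕ) {w w' : ℕ} (h : w ≤ w') : nthD S w' ≤ nthD S w := by
  rcases eq_or_lt_of_le h with rfl | hlt
  · exact le_refl _
  rcases lt_or_ge w' (dlist S).length with h' | h'
  · have hw : w < (dlist S).length := lt_trans hlt h'
    rw [nthD, nthD, List.getD_eq_getElem _ _ h', List.getD_eq_getElem _ _ hw]
    have hs : (dlist S).Pairwise (fun x y => y ≤ x) := by
      rw [dlist, List.pairwise_reverse]
      exact Multiset.pairwise_sort S (· ≤ ·)
    exact (List.pairwise_iff_getElem.mp hs) w w' hw h' hlt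
  · rw [nthD, List.getD_eq_default _ _ h']
    exact Nat.zero_le _

lemma topSum_mono (S : Multiset ℕ) {w w' : ℕ} (h : w ≤ w') : topSum S w ≤ topSum S w' := by
  induction w' with
  | zero => simp_all
  | succ n ih =>
    rcases Nat.lt_or_ge w (n+1) with h' | h'
    · exact le_trans (ih (by omega)) (by rw [topSum_succ]; omega)
    · have : w = n + 1 := le_antisymm h h'
      subst this; exact le_refl _

lemma topSum_all {S : Multiset ℕ} {w : ℕ} (h : Multiset.card S ≤ w) :
    topSum S w = S.sum := by
  rw [topSum_eq, List.take_of_length_le (by rw [dlist_length]; exact h), dlist,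
    List.sum_reverse]
  rw [← Multiset.sum_coe, Multiset.sort_eq]

/-! ### Basic facts about `colSum` -/

lemma colSum_zero (S : Multiset ℕ) : colSum S 0 = 0 := by
  simp [colSum]

lemma colSum_succ (S : Multiset ℕ) (w : ℕ) :
    colSum S (w + 1) = colSum S w + (S.filter (fun r => w + 1 ≤ r)).card := by
  rw [colSum, colSum, Finset.sum_Icc_succ_top (by omega)]

lemma colSum_cons (x : ℕ) (S : Multiset ℕ) (w : ℕ) :
    colSum (x ::ₘ S) w = min x w + colSum S w := by
  rw [colSum, colSum]
  have h1 : ∀ c, ((x ::ₘ S).filter (fun r => c ≤ r)).card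
      = (if c ≤ x then 1 else 0) + (S.filter (fun r => c ≤ r)).card := by
    intro c
    rw [Multiset.filter_cons]
    rcases le_or_gt c x with h | h
    · rw [if_pos h, if_pos h, Multiset.card_add, Multiset.card_singleton]
    · rw [if_neg (by omega), if_neg (by omega), Multiset.card_add, Multiset.card_zero]
  simp only [h1, Finset.sum_add_distrib]
  congr 1
  rw [Finset.sum_boole]
  have : (Finset.Icc 1 w).filter (fun c => c ≤ x) = Finset.Icc 1 (min x w) := by
    ext c
    simp only [Finset.mem_filter, Finset.mem_Icc]
    omega
  rw [this, Nat.card_Icc]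
  simp

lemma colSum_map (S : Multiset ℕ) (w : ℕ) :
    colSum S w = (S.map (fun r => min r w)).sum := by
  induction S using Multiset.induction with
  | empty => simp [colSum]
  | cons x S ih =>
    rw [colSum_cons, Multiset.map_cons, Multiset.sum_cons, ih, Nat.min_comm]

lemma colSum_le_sum (S : Multiset ℕ) (w : ℕ) : colSum S w ≤ S.sum := by
  rw [colSum_map]
  calc (S.map (fun r => min r w)).sum ≤ (S.map id).sum := by
        apply Multiset.sum_map_le_sum_map
        intro i _; exact min_le_left _ _
    _ = S.sum := by rw [Multiset.map_id]

lemma colSum_le_topSum_of_card {S : Multiset ℕ} {w : ℕ} (h : Multiset.card S ≤ w) :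
    colSum S w ≤ topSum S w := by
  rw [topSum_all h]; exact colSum_le_sum S w

/-! ### topSum of a split multiset -/

lemma sort_add_of_le (A B : Multiset ℕ) (h : ∀ y ∈ B, ∀ x ∈ A, y ≤ x) :
    Multiset.sort (B + A) (· ≤ ·) = Multiset.sort B (· ≤ ·) ++ Multiset.sort A (· ≤ ·) := by
  refine List.Perm.eq_of_pairwise' (r := (· ≤ ·)) ?_ ?_ ?_
  · exact Multiset.pairwise_sort _ _
  · rw [List.pairwise_append]
    refine ⟨Multiset.pairwise_sort _ _, Multiset.pairwise_sort _ _, ?_⟩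
    intro y hy x hx
    exact h y (by simpa using hy) x (by simpa using hx)
  · rw [← Multiset.coe_eq_coe, ← Multiset.coe_add, Multiset.sort_eq, Multiset.sort_eq,
      Multiset.sort_eq]

lemma topSum_split (A B : Multiset ℕ) (h : ∀ y ∈ B, ∀ x ∈ A, y ≤ x) :
    topSum (B + A) (Multiset.card A) = A.sum := by
  rw [topSum_eq, dlist, sort_add_of_le A B h, List.reverse_append]
  rw [show Multiset.card A = (Multiset.sort A (· ≤ ·)).reverse.length by
    simp [Multiset.length_sort]]
  rw [List.take_left, List.sum_reverse]
  rw [← Multiset.sum_coe, Multiset.sort_eq]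

/-! ### Interpolation -/

lemma interp (S : Multiset ℕ) (u v : ℕ)
    (hc : ∀ w, u < w → w ≤ v →
      (S.filter (fun r => w ≤ r)).card = (S.filter (fun r => v ≤ r)).card)
    (hu : colSum S u ≤ topSum S u) (hv : colSum S v ≤ topSum S v) :
    ∀ w, u ≤ w → w ≤ v → colSum S w ≤ topSum S w := by
  set c := (S.filter (fun r => v ≤ r)).card with hcdef
  intro w hw1 hw2
  rcases eq_or_lt_of_le hw1 with rfl | huw
  · exact hu
  rcases le_or_gt c (nthD S (w - 1)) with hcase | hcase
  · -- downward descent to u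
    have down : ∀ k, u < u + k → u + k ≤ v → c ≤ nthD S (u + k - 1) →
        colSum S (u + k) ≤ topSum S (u + k) := by
      intro k
      induction k with
      | zero => omega
      | succ k ih =>
        intro _ hle hnth
        have e1 : colSum S (u + k + 1) = colSum S (u + k) + c := by
          rw [colSum_succ, hc (u + k + 1) (by omega) (by omega)]
        have e2 : topSum S (u + k + 1) = topSum S (u + k) + nthD S (u + k) :=
          topSum_succ S (u + k)
        have hnth' : c ≤ nthD S (u + k) := by
          have : u + (k + 1) - 1 = u + k := by omega
          rwa [this] at hnth
        have hprev : colSum S (u + k) ≤ topSum S (u + k) := by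
          rcases Nat.eq_zero_or_pos k with rfl | hk
          · simpa using hu
          · exact ih (by omega) (by omega)
              (le_trans hnth' (nthD_antitone S (by omega)))
        have : u + (k + 1) = u + k + 1 := by omega
        rw [this, e1, e2]
        omega
    obtain ⟨k, rfl⟩ := Nat.exists_eq_add_of_le hw1
    exact down k huw hw2 hcase
  · -- upward comparison to v
    have up : ∀ k, w + k ≤ v →
        topSum S (w + k) ≤ topSum S w + k * c ∧
        colSum S (w + k) = colSum S w + k * c := by
      intro k
      induction k with
      | zero => simp
      | succ k ih =>
        intro hle
        obtain ⟨ht, hco⟩ := ih (by omega)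
        have hn : nthD S (w + k) ≤ c := by
          have h1 : nthD S (w + k) ≤ nthD S (w - 1) := nthD_antitone S (by omega)
          omega
        have hmul : (k + 1) * c = k * c + c := by ring
        constructor
        · have : w + (k + 1) = (w + k) + 1 := by omega
          rw [this, topSum_succ, hmul]
          omega
        · have : w + (k + 1) = (w + k) + 1 := by omega
          rw [this, colSum_succ, hc (w + k + 1) (by omega) (by omega), hco, hmul]
          omega
    obtain ⟨ht, hco⟩ := up (v - w) (by omega)
    rw [show w + (v - w) = v by omega] at ht hco
    -- colSum w + (v-w)*c = colSum v ≤ topSum v ≤ topSum w + (v-w)*c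
    have := hv
    omega


section helpers
variable {ι : Type*}

lemma card_finsetSum (s : Finset ι) (g : ι → Multiset ℕ) :
    Multiset.card (∑ i ∈ s, g i) = ∑ i ∈ s, Multiset.card (g i) := by
  induction s using Finset.cons_induction with
  | empty => simp
  | cons a s ha ih => simp [Finset.sum_cons, ih]

lemma sum_finsetSum (s : Finset ι) (g : ι → Multiset ℕ) :
    (∑ i ∈ s, g i).sum = ∑ i ∈ s, (g i).sum := by
  induction s using Finset.cons_induction with
  | empty => simp
  | cons a s ha ih => simp [Finset.sum_cons, ih]

lemma map_finsetSum (s : Finset ι) (g : ι → Multiset ℕ) (h : ℕ → ℕ) :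
    (∑ i ∈ s, g i).map h = ∑ i ∈ s, (g i).map h := by
  induction s using Finset.cons_induction with
  | empty => simp
  | cons a s ha ih => simp [Finset.sum_cons, ih]

end helpers

/-- Splitting `∑_{Icc 1 v}` at `u ≤ v`. -/
lemma Icc_split {M : Type*} [AddCommMonoid M] (u v : ℕ) (h : u ≤ v) (g : ℕ → M) :
    (∑ i ∈ Finset.Icc 1 u, g i) + ∑ i ∈ Finset.Icc (u+1) v, g i
      = ∑ i ∈ Finset.Icc 1 v, g i := by
  have := Finset.sum_Ioc_consecutive g (Nat.zero_le u) h
  simpa [← Finset.Icc_add_one_left_eq_Ioc] using this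

section ae
variable (p : ℕ) (a : ℕ → ℕ)

/-- Telescoping sum of block sizes. -/
lemma tele (hmn : ∀ i k, i ≤ k → k ≤ p → a i ≤ a k) :
    ∀ u v, u ≤ v → v ≤ p →
      ∑ k ∈ Finset.Icc (u+1) v, (a k - a (k-1)) = a v - a u := by
  intro u v huv hvp
  induction v with
  | zero =>
    have : u = 0 := by omega
    subst this; simp
  | succ n ih =>
    rcases Nat.lt_or_ge u (n+1) with h | h
    · rw [Finset.sum_Icc_succ_top (by omega), ih (by omega) (by omega)]
      have h1 : a u ≤ a n := hmn u n (by omega) (by omega)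
      have h2 : a n ≤ a (n+1) := hmn n (n+1) (by omega) hvp
      have h3 : n + 1 - 1 = n := by omega
      rw [h3]
      omega
    · have : u = n + 1 := by omega
      subst this
      simp
end ae

/-- The key inequality derived from an allocation. -/
lemma key (p : ℕ) (a e f : ℕ → ℕ) (ha0 : a 0 = 0)
    (hmn : ∀ i k, i ≤ k → k ≤ p → a i ≤ a k)
    (z : ℕ → ℕ → ℕ → ℕ)
    (hrow : ∀ i j, 1 ≤ j → j ≤ i → i ≤ p →
      ∑ k ∈ Finset.Icc 1 i, z i j k = e i * (a j - a (j - 1)))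
    (hcol : ∀ i k, 1 ≤ k → k ≤ i → i ≤ p →
      ∑ j ∈ Finset.Icc 1 i, z i j k = e i * (a k - a (k - 1)))
    (hcap : ∀ j k, 1 ≤ j → j ≤ p → 1 ≤ k → k ≤ p →
      ∑ i ∈ Finset.Icc (max j k) p, z i j k ≤ (a j - a (j - 1)) * (a k - a (k - 1)))
    (hf : ∀ i, 1 ≤ i → i ≤ p → f i ≤ e i)
    (j m : ℕ) (hj1 : 1 ≤ j) (hjp : j ≤ p) (hm1 : 1 ≤ m) (hmp : m ≤ p) :
    ∑ i ∈ Finset.Icc 1 p, (f i : ℤ) *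
      (if i ≤ m then (min (a i) (a j) : ℤ)
        else (min (a i) (a j) : ℤ) + (a m : ℤ) - (a i : ℤ))
      ≤ (a j : ℤ) * (a m : ℤ) := by
  classical
  set A : ℕ → ℕ := fun i =>
    ∑ j' ∈ Finset.Icc 1 (min i j), ∑ k' ∈ Finset.Icc 1 (min i m), z i j' k' with hA
  -- prefix row sums
  have rowpre : ∀ i t, i ≤ p → t ≤ i →
      ∑ j' ∈ Finset.Icc 1 t, ∑ k' ∈ Finset.Icc 1 i, z i j' k' = e i * a t := by
    intro i t hip hti
    have h1 : ∀ j' ∈ Finset.Icc 1 t, ∑ k' ∈ Finset.Icc 1 i, z i j' k'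
        = e i * (a j' - a (j'-1)) := by
      intro j' hj'
      simp only [Finset.mem_Icc] at hj'
      exact hrow i j' hj'.1 (le_trans hj'.2 hti) hip
    rw [Finset.sum_congr rfl h1, ← Finset.mul_sum]
    have := tele p a hmn 0 t (Nat.zero_le t) (le_trans hti hip)
    simp only [Nat.zero_add] at this
    rw [this, ha0, Nat.sub_zero]
  have colpre : ∀ i t, i ≤ p → t ≤ i →
      ∑ k' ∈ Finset.Icc 1 t, ∑ j' ∈ Finset.Icc 1 i, z i j' k' = e i * a t := by
    intro i t hip hti
    have h1 : ∀ k' ∈ Finset.Icc 1 t, ∑ j' ∈ Finset.Icc 1 i, z i j' k'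
        = e i * (a k' - a (k'-1)) := by
      intro k' hk'
      simp only [Finset.mem_Icc] at hk'
      exact hcol i k' hk'.1 (le_trans hk'.2 hti) hip
    rw [Finset.sum_congr rfl h1, ← Finset.mul_sum]
    have := tele p a hmn 0 t (Nat.zero_le t) (le_trans hti hip)
    simp only [Nat.zero_add] at this
    rw [this, ha0, Nat.sub_zero]
  -- β1 : i ≤ j
  have beta1 : ∀ i, 1 ≤ i → i ≤ p → i ≤ j → A i = e i * a (min i m) := by
    intro i hi1 hip hij
    have : min i j = i := min_eq_left hij
    rw [hA]
    simp only [this]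
    rw [Finset.sum_comm]
    exact colpre i (min i m) hip (min_le_left _ _)
  -- β2 : i ≤ m
  have beta2 : ∀ i, 1 ≤ i → i ≤ p → i ≤ m → A i = e i * a (min i j) := by
    intro i hi1 hip him
    have : min i m = i := min_eq_left him
    rw [hA]
    simp only [this]
    exact rowpre i (min i j) hip (min_le_left _ _)
  -- γ : j < i, m < i
  have gamma : ∀ i, j < i → m < i → i ≤ p →
      e i * a j ≤ A i + e i * (a i - a m) := by
    intro i hji hmi hip
    have hminj : min i j = j := min_eq_right (by omega)
    have hminm : min i m = m := min_eq_right (by omega)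
    have hsplit : ∀ j' ∈ Finset.Icc 1 j,
        ∑ k' ∈ Finset.Icc 1 i, z i j' k'
        = (∑ k' ∈ Finset.Icc 1 m, z i j' k') + ∑ k' ∈ Finset.Icc (m+1) i, z i j' k' := by
      intro j' _
      exact (Icc_split m i (by omega) _).symm
    have e1 : e i * a j
        = A i + ∑ j' ∈ Finset.Icc 1 j, ∑ k' ∈ Finset.Icc (m+1) i, z i j' k' := by
      rw [← rowpre i j hip (by omega), Finset.sum_congr rfl hsplit,
        Finset.sum_add_distrib, hA]
      simp only [hminj, hminm]
    have e2 : ∑ j' ∈ Finset.Icc 1 j, ∑ k' ∈ Finset.Icc (m+1) i, z i j' k'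
        ≤ e i * (a i - a m) := by
      calc ∑ j' ∈ Finset.Icc 1 j, ∑ k' ∈ Finset.Icc (m+1) i, z i j' k'
          ≤ ∑ j' ∈ Finset.Icc 1 i, ∑ k' ∈ Finset.Icc (m+1) i, z i j' k' := by
            apply Finset.sum_le_sum_of_subset
            exact Finset.Icc_subset_Icc_right (by omega)
        _ = ∑ k' ∈ Finset.Icc (m+1) i, ∑ j' ∈ Finset.Icc 1 i, z i j' k' :=
            Finset.sum_comm
        _ = ∑ k' ∈ Finset.Icc (m+1) i, e i * (a k' - a (k'-1)) := by
            apply Finset.sum_congr rfl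
            intro k' hk'
            simp only [Finset.mem_Icc] at hk'
            exact hcol i k' (by omega) hk'.2 hip
        _ = e i * (a i - a m) := by
            rw [← Finset.mul_sum, tele p a hmn m i (by omega) hip]
    omega
  -- α : total capacity
  have alpha : ∑ i ∈ Finset.Icc 1 p, A i ≤ a j * a m := by
    set g' : ℕ → ℕ → ℕ → ℕ :=
      fun i j' k' => if j' ≤ i ∧ k' ≤ i then z i j' k' else 0 with hg'
    have claim1 : ∀ i ∈ Finset.Icc 1 p,
        A i = ∑ j' ∈ Finset.Icc 1 j, ∑ k' ∈ Finset.Icc 1 m, g' i j' k' := by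
      intro i _
      have inner : ∀ j', j' ≤ i →
          ∑ k' ∈ Finset.Icc 1 (min i m), z i j' k'
          = ∑ k' ∈ Finset.Icc 1 m, g' i j' k' := by
        intro j' hj'i
        have c1 : ∑ k' ∈ Finset.Icc 1 (min i m), z i j' k'
            = ∑ k' ∈ Finset.Icc 1 (min i m), g' i j' k' := by
          apply Finset.sum_congr rfl
          intro k' hk'
          simp only [Finset.mem_Icc] at hk'
          rw [hg']
          simp only
          rw [if_pos (by omega)]
        rw [c1]
        apply Finset.sum_subset (Finset.Icc_subset_Icc_right (min_le_right _ _))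
        intro k' hk1 hk2
        simp only [Finset.mem_Icc] at hk1 hk2
        rw [hg']
        simp only
        rw [if_neg (by omega)]
      have outer : A i = ∑ j' ∈ Finset.Icc 1 (min i j),
          ∑ k' ∈ Finset.Icc 1 m, g' i j' k' := by
        rw [hA]
        apply Finset.sum_congr rfl
        intro j' hj'
        simp only [Finset.mem_Icc] at hj'
        exact inner j' (by omega)
      rw [outer]
      apply Finset.sum_subset (Finset.Icc_subset_Icc_right (min_le_right _ _))
      intro j' hj1 hj2
      simp only [Finset.mem_Icc] at hj1 hj2
      apply Finset.sum_eq_zero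
      intro k' _
      rw [hg']
      simp only
      rw [if_neg (by omega)]
    have claim3 : ∀ j' ∈ Finset.Icc 1 j, ∀ k' ∈ Finset.Icc 1 m,
        ∑ i ∈ Finset.Icc 1 p, g' i j' k' = ∑ i ∈ Finset.Icc (max j' k') p, z i j' k' := by
      intro j' hj' k' hk'
      simp only [Finset.mem_Icc] at hj' hk'
      have c1 : ∑ i ∈ Finset.Icc (max j' k') p, z i j' k'
          = ∑ i ∈ Finset.Icc (max j' k') p, g' i j' k' := by
        apply Finset.sum_congr rfl
        intro i hi
        simp only [Finset.mem_Icc] at hi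
        rw [hg']
        simp only
        rw [if_pos (by omega)]
      rw [c1]
      symm
      apply Finset.sum_subset
      · apply Finset.Icc_subset_Icc_left (by omega)
      · intro i hi1 hi2
        simp only [Finset.mem_Icc] at hi1 hi2
        rw [hg']
        simp only
        rw [if_neg (by omega)]
    calc ∑ i ∈ Finset.Icc 1 p, A i
        = ∑ i ∈ Finset.Icc 1 p, ∑ j' ∈ Finset.Icc 1 j,
            ∑ k' ∈ Finset.Icc 1 m, g' i j' k' := Finset.sum_congr rfl claim1
      _ = ∑ j' ∈ Finset.Icc 1 j, ∑ i ∈ Finset.Icc 1 p,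
            ∑ k' ∈ Finset.Icc 1 m, g' i j' k' := Finset.sum_comm
      _ = ∑ j' ∈ Finset.Icc 1 j, ∑ k' ∈ Finset.Icc 1 m,
            ∑ i ∈ Finset.Icc 1 p, g' i j' k' := by
            apply Finset.sum_congr rfl
            intro j' _
            exact Finset.sum_comm
      _ = ∑ j' ∈ Finset.Icc 1 j, ∑ k' ∈ Finset.Icc 1 m,
            ∑ i ∈ Finset.Icc (max j' k') p, z i j' k' := by
            apply Finset.sum_congr rfl
            intro j' hj'
            apply Finset.sum_congr rfl
            intro k' hk'
            exact claim3 j' hj' k' hk'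
      _ ≤ ∑ j' ∈ Finset.Icc 1 j, ∑ k' ∈ Finset.Icc 1 m,
            (a j' - a (j'-1)) * (a k' - a (k'-1)) := by
            apply Finset.sum_le_sum
            intro j' hj'
            apply Finset.sum_le_sum
            intro k' hk'
            simp only [Finset.mem_Icc] at hj' hk'
            exact hcap j' k' hj'.1 (le_trans hj'.2 hjp) hk'.1 (le_trans hk'.2 hmp)
      _ = a j * a m := by
            rw [← Finset.sum_mul_sum]
            have t1 := tele p a hmn 0 j (Nat.zero_le j) hjp
            have t2 := tele p a hmn 0 m (Nat.zero_le m) hmp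
            simp only [Nat.zero_add] at t1 t2
            rw [t1, t2, ha0, Nat.sub_zero, Nat.sub_zero]
  -- per-index bound and conclusion
  have hper : ∀ i ∈ Finset.Icc 1 p,
      (f i : ℤ) * (if i ≤ m then (min (a i) (a j) : ℤ)
          else (min (a i) (a j) : ℤ) + (a m : ℤ) - (a i : ℤ))
        ≤ (A i : ℤ) := by
    intro i hi
    simp only [Finset.mem_Icc] at hi
    obtain ⟨hi1, hip⟩ := hi
    have hfe : (f i : ℤ) ≤ (e i : ℤ) := by exact_mod_cast hf i hi1 hip
    have hf0 : (0 : ℤ) ≤ (f i : ℤ) := Int.natCast_nonneg _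
    have hcmin : (min ((a i : ℕ) : ℤ) ((a j : ℕ) : ℤ)) = ((min (a i) (a j) : ℕ) : ℤ) :=
      (Nat.cast_min _ _).symm
    by_cases him : i ≤ m
    · rw [if_pos him]
      have hmin : min (a i) (a j) = a (min i j) := by
        rcases le_total i j with h | h
        · rw [min_eq_left h, min_eq_left (hmn i j h hjp)]
        · rw [min_eq_right h, min_eq_right (hmn j i h hip)]
      have hAi : A i = e i * a (min i j) := beta2 i hi1 hip him
      rw [hcmin, hmin]
      calc (f i : ℤ) * ((a (min i j) : ℕ) : ℤ)
          ≤ (e i : ℤ) * ((a (min i j) : ℕ) : ℤ) :=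
            mul_le_mul_of_nonneg_right hfe (Int.natCast_nonneg _)
        _ = (A i : ℤ) := by rw [hAi]; push_cast; ring
    · rw [if_neg him]
      push_neg at him
      by_cases hij : i ≤ j
      · -- value is a m
        have hmin : min (a i) (a j) = a i := min_eq_left (hmn i j hij hjp)
        rw [hcmin, hmin]
        have hval : ((a i : ℕ) : ℤ) + (a m : ℤ) - (a i : ℤ) = ((a m : ℕ) : ℤ) := by ring
        rw [hval]
        have hAi : A i = e i * a (min i m) := beta1 i hi1 hip hij
        rw [min_eq_right (by omega)] at hAi
        calc (f i : ℤ) * ((a m : ℕ) : ℤ) ≤ (e i : ℤ) * ((a m : ℕ) : ℤ) :=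
              mul_le_mul_of_nonneg_right hfe (Int.natCast_nonneg _)
          _ = (A i : ℤ) := by rw [hAi]; push_cast; ring
      · push_neg at hij
        have hmin : min (a i) (a j) = a j := min_eq_right (hmn j i (by omega) hip)
        rw [hcmin, hmin]
        set v : ℤ := ((a j : ℕ) : ℤ) + (a m : ℤ) - (a i : ℤ) with hv
        have hgam := gamma i hij him hip
        have hsub : ((a i - a m : ℕ) : ℤ) = (a i : ℤ) - (a m : ℤ) := by
          have : a m ≤ a i := hmn m i (by omega) hip
          omega
        have hgam' : (e i : ℤ) * (a j : ℤ)
            ≤ (A i : ℤ) + (e i : ℤ) * ((a i : ℤ) - (a m : ℤ)) := by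
          have hcast : ((e i * a j : ℕ) : ℤ) ≤ ((A i + e i * (a i - a m) : ℕ) : ℤ) := by
            exact_mod_cast hgam
          push_cast at hcast
          rw [hsub] at hcast
          linarith
        rcases le_or_gt v 0 with hvneg | hvpos
        · calc (f i : ℤ) * v ≤ 0 := mul_nonpos_of_nonneg_of_nonpos hf0 hvneg
            _ ≤ (A i : ℤ) := Int.natCast_nonneg _
        · calc (f i : ℤ) * v ≤ (e i : ℤ) * v :=
              mul_le_mul_of_nonneg_right hfe (le_of_lt hvpos)
            _ ≤ (A i : ℤ) := by rw [hv]; nlinarith [hgam']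
  calc ∑ i ∈ Finset.Icc 1 p, (f i : ℤ) *
        (if i ≤ m then (min (a i) (a j) : ℤ)
          else (min (a i) (a j) : ℤ) + (a m : ℤ) - (a i : ℤ))
      ≤ ∑ i ∈ Finset.Icc 1 p, (A i : ℤ) := Finset.sum_le_sum hper
    _ = ((∑ i ∈ Finset.Icc 1 p, A i : ℕ) : ℤ) := by push_cast; rfl
    _ ≤ ((a j * a m : ℕ) : ℤ) := by exact_mod_cast alpha
    _ = (a j : ℤ) * (a m : ℤ) := by push_cast; ring


/-- The breakpoint inequality: at widths `a j` the column sums are dominated. -/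
lemma breakpoint (p : ℕ) (hp : 1 ≤ p) (a e : ℕ → ℕ) (ha0 : a 0 = 0)
    (hmn : ∀ i k, i ≤ k → k ≤ p → a i ≤ a k)
    (hstrict : ∀ i k, i < k → k ≤ p → a i < a k)
    (z : ℕ → ℕ → ℕ → ℕ)
    (hrow : ∀ i j, 1 ≤ j → j ≤ i → i ≤ p →
      ∑ k ∈ Finset.Icc 1 i, z i j k = e i * (a j - a (j - 1)))
    (hcol : ∀ i k, 1 ≤ k → k ≤ i → i ≤ p →
      ∑ j ∈ Finset.Icc 1 i, z i j k = e i * (a k - a (k - 1)))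
    (hcap : ∀ j k, 1 ≤ j → j ≤ p → 1 ≤ k → k ≤ p →
      ∑ i ∈ Finset.Icc (max j k) p, z i j k ≤ (a j - a (j - 1)) * (a k - a (k - 1)))
    (f : ℕ → ℕ) (hf : ∀ i, 1 ≤ i → i ≤ p → f i ≤ e i)
    (S : Multiset ℕ) (hSd : S = ∑ i ∈ Finset.Icc 1 p, Multiset.replicate (f i) (a i))
    (j : ℕ) (hj1 : 1 ≤ j) (hjp : j ≤ p) :
    colSum S (a j) ≤ topSum S (a j) := by
  classical
  rcases le_or_gt (Multiset.card S) (a j) with hcard | hcard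
  · exact colSum_le_topSum_of_card hcard
  -- main case : a j < card S
  have hcardS : Multiset.card S = ∑ i ∈ Finset.Icc 1 p, f i := by
    rw [hSd, card_finsetSum]
    simp [Multiset.card_replicate]
  have haj0 : 0 < a j := by
    have := hstrict 0 j (by omega) hjp
    omega
  set P : ℕ → Prop := fun t => a j ≤ ∑ i ∈ Finset.Icc t p, f i with hP
  have hP1 : P 1 := by rw [hP]; simp only; rw [← hcardS]; omega
  set m := Nat.findGreatest P p with hmdef
  have hm1 : 1 ≤ m := Nat.le_findGreatest hp hP1
  have hmp : m ≤ p := Nat.findGreatest_le p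
  have hPm : P m := Nat.findGreatest_spec hp hP1
  set F := ∑ i ∈ Finset.Icc (m+1) p, f i with hFdef
  have hFlt : F < a j := by
    rcases le_or_gt (m+1) p with h | h
    · have hng : ¬ P (m+1) := Nat.findGreatest_is_greatest (by omega) h
      rw [hP] at hng
      simp only [not_le] at hng
      exact hng
    · have hempty : Finset.Icc (m+1) p = ∅ := Finset.Icc_eq_empty (by omega)
      rw [hFdef, hempty]
      simpa using haj0
  set q := a j - F with hq
  have hqpos : 0 < q := by omega
  have hqfm : q ≤ f m := by
    have hsum : ∑ i ∈ Finset.Icc m p, f i = f m + F := by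
      rw [Finset.Icc_eq_cons_Ioc hmp, Finset.sum_cons, ← Finset.Icc_add_one_left_eq_Ioc]
    have hPm' : a j ≤ f m + F := by rw [← hsum]; exact hPm
    omega
  -- decomposition of S into small rows MB and the a j largest rows MA
  set MA := (∑ i ∈ Finset.Icc (m+1) p, Multiset.replicate (f i) (a i))
      + Multiset.replicate q (a m) with hMA
  set MB := (∑ i ∈ Finset.Icc 1 (m-1), Multiset.replicate (f i) (a i))
      + Multiset.replicate (f m - q) (a m) with hMB
  have hSplit : S = MB + MA := by
    have h1 : (∑ i ∈ Finset.Icc 1 m, Multiset.replicate (f i) (a i))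
        + ∑ i ∈ Finset.Icc (m+1) p, Multiset.replicate (f i) (a i)
        = ∑ i ∈ Finset.Icc 1 p, Multiset.replicate (f i) (a i) :=
      Icc_split m p hmp _
    have h2 : ∑ i ∈ Finset.Icc 1 m, Multiset.replicate (f i) (a i)
        = (∑ i ∈ Finset.Icc 1 (m-1), Multiset.replicate (f i) (a i))
          + Multiset.replicate (f m) (a m) := by
      conv_lhs => rw [show m = (m-1)+1 by omega]
      rw [Finset.sum_Icc_succ_top (by omega)]
      rw [show (m-1)+1 = m by omega]
    have h3 : Multiset.replicate (f m) (a m)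
        = Multiset.replicate (f m - q) (a m) + Multiset.replicate q (a m) := by
      rw [← Multiset.replicate_add]
      congr 1
      omega
    rw [hSd, ← h1, h2, h3, hMA, hMB]
    abel
  have hcardMA : Multiset.card MA = a j := by
    rw [hMA, Multiset.card_add, card_finsetSum]
    simp only [Multiset.card_replicate]
    rw [← hFdef]
    omega
  have horder : ∀ y ∈ MB, ∀ x ∈ MA, y ≤ x := by
    intro y hy x hx
    have hy' : y ≤ a m := by
      rw [hMB] at hy
      rcases Multiset.mem_add.mp hy with hy | hy
      · obtain ⟨i, hi, hyi⟩ := Multiset.mem_sum.mp hy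
        simp only [Finset.mem_Icc] at hi
        have : y = a i := Multiset.eq_of_mem_replicate hyi
        rw [this]
        exact hmn i m (by omega) hmp
      · exact le_of_eq (Multiset.eq_of_mem_replicate hy)
    have hx' : a m ≤ x := by
      rw [hMA] at hx
      rcases Multiset.mem_add.mp hx with hx | hx
      · obtain ⟨i, hi, hxi⟩ := Multiset.mem_sum.mp hx
        simp only [Finset.mem_Icc] at hi
        have : x = a i := Multiset.eq_of_mem_replicate hxi
        rw [this]
        exact hmn m i (by omega) (by omega)
      · exact ge_of_eq (Multiset.eq_of_mem_replicate hx)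
    omega
  have hts : topSum S (a j) = (∑ i ∈ Finset.Icc (m+1) p, f i * a i) + q * a m := by
    rw [hSplit, ← hcardMA, topSum_split MA MB horder, hMA, Multiset.sum_add,
      sum_finsetSum]
    simp [Multiset.sum_replicate, smul_eq_mul]
  have hcs : colSum S (a j) = ∑ i ∈ Finset.Icc 1 p, f i * min (a i) (a j) := by
    rw [colSum_map, hSd, map_finsetSum, sum_finsetSum]
    apply Finset.sum_congr rfl
    intro i _
    rw [Multiset.map_replicate, Multiset.sum_replicate, smul_eq_mul]
  have hkey := key p a e f ha0 hmn z hrow hcol hcap hf j m hj1 hjp hm1 hmp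
  -- pass to ℤ and conclude
  have hgoalZ : (∑ i ∈ Finset.Icc 1 p, (f i : ℤ) * min ((a i : ℕ) : ℤ) ((a j : ℕ) : ℤ))
      ≤ (∑ i ∈ Finset.Icc (m+1) p, (f i : ℤ) * ((a i : ℕ) : ℤ))
        + (q : ℤ) * ((a m : ℕ) : ℤ) := by
    have e1 : ∑ i ∈ Finset.Icc 1 m, (f i : ℤ) *
        (if i ≤ m then min ((a i : ℕ) : ℤ) ((a j : ℕ) : ℤ)
          else min ((a i : ℕ) : ℤ) ((a j : ℕ) : ℤ) + ((a m : ℕ) : ℤ) - ((a i : ℕ) : ℤ))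
        = ∑ i ∈ Finset.Icc 1 m, (f i : ℤ) * min ((a i : ℕ) : ℤ) ((a j : ℕ) : ℤ) := by
      apply Finset.sum_congr rfl
      intro i hi
      simp only [Finset.mem_Icc] at hi
      rw [if_pos hi.2]
    have e2 : ∑ i ∈ Finset.Icc (m+1) p, (f i : ℤ) *
        (if i ≤ m then min ((a i : ℕ) : ℤ) ((a j : ℕ) : ℤ)
          else min ((a i : ℕ) : ℤ) ((a j : ℕ) : ℤ) + ((a m : ℕ) : ℤ) - ((a i : ℕ) : ℤ))
        = (∑ i ∈ Finset.Icc (m+1) p, (f i : ℤ) * min ((a i : ℕ) : ℤ) ((a j : ℕ) : ℤ))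
          + ((∑ i ∈ Finset.Icc (m+1) p, (f i : ℤ)) * ((a m : ℕ) : ℤ)
              - ∑ i ∈ Finset.Icc (m+1) p, (f i : ℤ) * ((a i : ℕ) : ℤ)) := by
      rw [Finset.sum_mul, ← Finset.sum_sub_distrib, ← Finset.sum_add_distrib]
      apply Finset.sum_congr rfl
      intro i hi
      simp only [Finset.mem_Icc] at hi
      rw [if_neg (by omega)]
      ring
    have hsplitK := Icc_split m p hmp (fun i => (f i : ℤ) *
        (if i ≤ m then min ((a i : ℕ) : ℤ) ((a j : ℕ) : ℤ)
          else min ((a i : ℕ) : ℤ) ((a j : ℕ) : ℤ) + ((a m : ℕ) : ℤ) - ((a i : ℕ) : ℤ)))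
    have hsplitG := Icc_split m p hmp
      (fun i => (f i : ℤ) * min ((a i : ℕ) : ℤ) ((a j : ℕ) : ℤ))
    rw [e1, e2] at hsplitK
    have hFsum : (F : ℤ) = ∑ i ∈ Finset.Icc (m+1) p, (f i : ℤ) := by
      rw [hFdef]
      push_cast
      rfl
    have hFq : (q : ℤ) * ((a m : ℕ) : ℤ)
        = ((a j : ℕ) : ℤ) * ((a m : ℕ) : ℤ) - (F : ℤ) * ((a m : ℕ) : ℤ) := by
      have : (q : ℤ) = ((a j : ℕ) : ℤ) - (F : ℤ) := by
        rw [hq]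
        omega
      rw [this]
      ring
    rw [← hFsum] at hsplitK
    -- hkey with split
    rw [← hsplitK] at hkey
    rw [← hsplitG, hFq]
    -- atoms: S1 := sum over Icc 1 m of f*min, S2 := sum over Icc (m+1) p of f*min,
    -- S3 := F * a m, S4 := sum f*a, S5 := a j * a m
    nlinarith [hkey]
  rw [hcs, hts]
  zify
  push_cast
  convert hgoalZ using 2

end AllocWide

open AllocWide in
/-- if `Y(a;e)` has an allocation, then it is wide. -/
theorem allocation_implies_wide (p : ℕ) (hp : 1 ≤ p) (a e : ℕ → ℕ)
    (ha0 : a 0 = 0) (ha1 : 0 < a 1)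
    (hmono : ∀ i, 1 ≤ i → i < p → a i < a (i + 1))
    (he : ∀ i, 1 ≤ i → i ≤ p → 0 < e i)
    (halloc : HasAllocation p a e) :
    Wide (rowMultiset p a e) := by
  classical
  obtain ⟨z, hrow, hcol, hcap⟩ := halloc
  -- monotonicity of a on [0, p]
  have hstrict : ∀ i k, i < k → k ≤ p → a i < a k := by
    intro i k
    induction k with
    | zero => omega
    | succ n ih =>
      intro hik hkp
      have hstep : a n < a (n+1) := by
        rcases Nat.eq_zero_or_pos n with rfl | hn
        · rw [ha0]; exact ha1
        · exact hmono n hn (by omega)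
      rcases Nat.lt_or_ge i n with h | h
      · exact lt_trans (ih h (by omega)) hstep
      · have : i = n := by omega
        subst this
        exact hstep
  have hmn : ∀ i k, i ≤ k → k ≤ p → a i ≤ a k := by
    intro i k hik hkp
    rcases eq_or_lt_of_le hik with rfl | h
    · exact le_refl _
    · exact le_of_lt (hstrict i k h hkp)
  intro S hS w hw
  -- decompose S according to multiplicities
  set f : ℕ → ℕ := fun i => S.count (a i) with hfdef
  have hmemS : ∀ r ∈ S, ∃ i, 1 ≤ i ∧ i ≤ p ∧ r = a i := by
    intro r hr
    have hrR : r ∈ rowMultiset p a e := Multiset.mem_of_le hS hr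
    rw [rowMultiset] at hrR
    obtain ⟨i, hi, hri⟩ := Multiset.mem_sum.mp hrR
    simp only [Finset.mem_Icc] at hi
    exact ⟨i, hi.1, hi.2, Multiset.eq_of_mem_replicate hri⟩
  have hainj : ∀ i i', 1 ≤ i → i ≤ p → 1 ≤ i' → i' ≤ p → a i = a i' → i = i' := by
    intro i i' h1 h2 h3 h4 heq
    by_contra hne
    rcases Nat.lt_or_ge i i' with h | h
    · have := hstrict i i' h h4; omega
    · have hlt : i' < i := by omega
      have := hstrict i' i hlt h2; omega
  have hcountR : ∀ i, 1 ≤ i → i ≤ p → (rowMultiset p a e).count (a i) = e i := by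
    intro i hi1 hip
    rw [rowMultiset, Multiset.count_sum']
    rw [Finset.sum_eq_single i]
    · rw [Multiset.count_replicate, if_pos rfl]
    · intro i' hi' hne
      simp only [Finset.mem_Icc] at hi'
      rw [Multiset.count_replicate, if_neg]
      intro heq
      exact hne (hainj i' i hi'.1 hi'.2 hi1 hip heq)
    · intro hni
      exact absurd (Finset.mem_Icc.mpr ⟨hi1, hip⟩) hni
  have hf : ∀ i, 1 ≤ i → i ≤ p → f i ≤ e i := by
    intro i hi1 hip
    rw [hfdef]
    simp only
    rw [← hcountR i hi1 hip]
    exact Multiset.count_le_of_le _ hS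
  have hSd : S = ∑ i ∈ Finset.Icc 1 p, Multiset.replicate (f i) (a i) := by
    apply Multiset.ext.mpr
    intro x
    rw [Multiset.count_sum']
    by_cases hx : ∃ i, 1 ≤ i ∧ i ≤ p ∧ x = a i
    · obtain ⟨i₀, hi₀1, hi₀p, rfl⟩ := hx
      rw [Finset.sum_eq_single i₀]
      · rw [Multiset.count_replicate, if_pos rfl]
      · intro i' hi' hne
        simp only [Finset.mem_Icc] at hi'
        rw [Multiset.count_replicate, if_neg]
        intro heq
        exact hne (hainj i' i₀ hi'.1 hi'.2 hi₀1 hi₀p heq)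
      · intro hni
        exact absurd (Finset.mem_Icc.mpr ⟨hi₀1, hi₀p⟩) hni
    · have hxS : x ∉ S := by
        intro hxS
        obtain ⟨i, h1, h2, h3⟩ := hmemS x hxS
        exact hx ⟨i, h1, h2, h3⟩
      rw [Multiset.count_eq_zero_of_notMem hxS]
      symm
      apply Finset.sum_eq_zero
      intro i' hi'
      simp only [Finset.mem_Icc] at hi'
      rw [Multiset.count_replicate, if_neg]
      intro heq
      exact hx ⟨i', hi'.1, hi'.2, heq.symm⟩
  -- breakpoint inequalities (including j = 0)
  have hbp : ∀ j, j ≤ p → colSum S (a j) ≤ topSum S (a j) := by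
    intro j hjp
    rcases Nat.eq_zero_or_pos j with rfl | hj1
    · rw [ha0, colSum_zero, topSum_zero]
    · exact breakpoint p hp a e ha0 hmn hstrict z hrow hcol hcap f hf S hSd j hj1 hjp
  -- locate w among the breakpoints
  set P : ℕ → Prop := fun t => a t < w with hPdef
  have hP0 : P 0 := by rw [hPdef]; simp only; omega
  set j0 := Nat.findGreatest P p with hj0def
  have hj0p : j0 ≤ p := Nat.findGreatest_le p
  have hj0 : P j0 := Nat.findGreatest_spec (Nat.zero_le p) hP0
  rw [hPdef] at hj0
  rcases eq_or_lt_of_le hj0p with hj0e | hj0lt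
  · -- w > a p : columns beyond a p are empty
    have hja : a p < w := by rw [← hj0e]; exact hj0
    have hcc : colSum S w = colSum S (a p) := by
      rw [colSum_map, colSum_map]
      apply congrArg
      apply Multiset.map_congr rfl
      intro r hr
      obtain ⟨i, hi1, hip, rfl⟩ := hmemS r hr
      have h1 : a i ≤ a p := hmn i p hip (le_refl _)
      omega
    rw [hcc]
    exact le_trans (hbp p (le_refl _)) (topSum_mono S (le_of_lt hja))
  · -- a j0 < w ≤ a (j0 + 1)
    have hnP : ¬ P (j0 + 1) :=
      Nat.findGreatest_is_greatest (P := P) (n := p) (by rw [← hj0def]; omega) (by omega)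
    rw [hPdef] at hnP
    simp only [not_lt] at hnP
    -- interpolate on [a j0, a (j0+1)]
    have hcc : ∀ w', a j0 < w' → w' ≤ a (j0+1) →
        (S.filter (fun r => w' ≤ r)).card = (S.filter (fun r => a (j0+1) ≤ r)).card := by
      intro w' hw1 hw2
      congr 1
      apply Multiset.filter_congr
      intro r hr
      obtain ⟨i, hi1, hip, rfl⟩ := hmemS r hr
      constructor
      · intro hwr
        rcases Nat.lt_or_ge i (j0+1) with h | h
        · have : a i ≤ a j0 := hmn i j0 (by omega) hj0p
          omega
        · exact hmn (j0+1) i h hip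
      · intro har
        omega
    exact interp S (a j0) (a (j0+1)) hcc (hbp j0 hj0p) (hbp (j0+1) (by omega)) w
      (by omega) hnP
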